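/- Let I ⊆ S = K[x₁,…,xₙ] be a monomial ideal and let x^p y^q be a monomial in the minimal generating set G(I), where p ≥ 1, q ≥ 1, and x, y are variables. Suppose every f ∈ G(I) satisfies: (1) if f ≠ x^p y^q then y does not divide f, and (2) if x divides f then deg_x(f) ≥ p. Then (I^t : x^p y^q) = I^{t−1} for all t ≥ 2. -/

import Mathlib

open MvPolynomial SimpleGraph

private lemma list_sum_apply_aux {n : ℕ} (z : Fin n) (l : List (Fin n →₀ ℕ)) :
    l.sum z = (l.map fun d => d z).sum := by
  induction l with
  | nil => simp
  | cons a t ih => simp [ih]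

private lemma list_sum_zero_aux {n : ℕ} (z : Fin n) (l : List (Fin n →₀ ℕ))
    (h : ∀ d ∈ l, d z = 0) : l.sum z = 0 := by
  rw [list_sum_apply_aux]
  apply List.sum_eq_zero
  intro a ha
  obtain ⟨d, hd, rfl⟩ := List.mem_map.mp ha
  exact h d hd

/-- The core combinatorial lemma. -/
private lemma core_aux {n : ℕ} (D : Set (Fin n →₀ ℕ)) (x y : Fin n) (hxy : x ≠ y)
    (p q : ℕ) (dm : Fin n →₀ ℕ)
    (hdm : dm = Finsupp.single x p + Finsupp.single y q)
    (hD1 : ∀ d ∈ D, d ≠ dm → d y = 0)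
    (hD2 : ∀ d ∈ D, 1 ≤ d x → p ≤ d x)
    (e : Fin n →₀ ℕ) (l : List (Fin n →₀ ℕ)) (hlen : 1 ≤ l.length)
    (hmemD : ∀ d ∈ l, d ∈ D) (hsum : l.sum ≤ e + dm) :
    ∃ l' : List (Fin n →₀ ℕ), l'.length = l.length - 1 ∧ (∀ d ∈ l', d ∈ D) ∧ l'.sum ≤ e := by
  classical
  have hdmx : dm x = p := by simp [hdm, Finsupp.single_apply, hxy, Ne.symm hxy]
  have hdmz : ∀ z : Fin n, z ≠ x → z ≠ y → dm z = 0 := by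
    intro z hzx hzy
    simp [hdm, Finsupp.single_apply, Ne.symm hzx, Ne.symm hzy]
  have hsum' : ∀ z : Fin n, l.sum z ≤ e z + dm z := by
    intro z
    have := hsum z
    simpa [Finsupp.add_apply] using this
  by_cases hc1 : dm ∈ l
  · refine ⟨l.erase dm, List.length_erase_of_mem hc1, fun d hd => hmemD d (List.mem_of_mem_erase hd), ?_⟩
    have hperm : l.sum = dm + (l.erase dm).sum := by
      have := (List.perm_cons_erase hc1).sum_eq
      simpa using this
    intro z
    have h1 := hsum' z
    rw [hperm] at h1
    simp only [Finsupp.add_apply] at h1 ⊢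
    omega
  · by_cases hc2 : ∃ a ∈ l, 1 ≤ a x
    · obtain ⟨a, ha, hax⟩ := hc2
      have hax' : p ≤ a x := hD2 a (hmemD a ha) hax
      refine ⟨l.erase a, List.length_erase_of_mem ha, fun d hd => hmemD d (List.mem_of_mem_erase hd), ?_⟩
      have hperm : l.sum = a + (l.erase a).sum := by
        have := (List.perm_cons_erase ha).sum_eq
        simpa using this
      intro z
      have h1 := hsum' z
      rw [hperm] at h1
      simp only [Finsupp.add_apply] at h1 ⊢
      by_cases hzy : z = y
      · have h0 : (l.erase a).sum z = 0 := by
          apply list_sum_zero_aux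
          intro d hd
          have hdl := List.mem_of_mem_erase hd
          rw [hzy]
          exact hD1 d (hmemD d hdl) (fun h => hc1 (h ▸ hdl))
        omega
      · by_cases hzx : z = x
        · have hdmz' : dm z = p := by rw [hzx]; exact hdmx
          have hax'' : p ≤ a z := by rw [hzx]; exact hax'
          omega
        · rw [hdmz z hzx hzy] at h1
          omega
    · push_neg at hc2
      cases l with
      | nil => simp at hlen
      | cons hd tl =>
        refine ⟨tl, by simp, fun d hdd => hmemD d (List.mem_cons_of_mem _ hdd), ?_⟩
        intro z
        have h1 := hsum' z
        have hsumeq : (hd :: tl).sum = hd + tl.sum := by simp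
        rw [hsumeq] at h1
        simp only [Finsupp.add_apply] at h1 ⊢
        by_cases hzy : z = y
        · have h0 : tl.sum z = 0 := by
            apply list_sum_zero_aux
            intro d hdd
            have hdl := List.mem_cons_of_mem hd hdd
            rw [hzy]
            exact hD1 d (hmemD d hdl) (fun h => hc1 (h ▸ hdl))
          omega
        · by_cases hzx : z = x
          · have h0 : tl.sum z = 0 := by
              apply list_sum_zero_aux
              intro d hdd
              have := hc2 d (List.mem_cons_of_mem hd hdd)
              rw [hzx]
              omega
            omega
          · rw [hdmz z hzx hzy] at h1
            omega

private lemma pow_span_monomials {n : ℕ} {K : Type} [Field K] (D : Set (Fin n →₀ ℕ)) (k : ℕ) :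
    (Ideal.span ((fun d => monomial d (1 : K)) '' D)) ^ k =
      Ideal.span ((fun d => monomial d (1 : K)) ''
        {e | ∃ l : List (Fin n →₀ ℕ), l.length = k ∧ (∀ d ∈ l, d ∈ D) ∧ l.sum = e}) := by
  induction k with
  | zero =>
    rw [pow_zero]
    have hset : {e : Fin n →₀ ℕ | ∃ l : List (Fin n →₀ ℕ),
        l.length = 0 ∧ (∀ d ∈ l, d ∈ D) ∧ l.sum = e} = {0} := by
      ext e
      constructor
      · rintro ⟨l, hl, -, rfl⟩
        rw [List.length_eq_zero_iff] at hl
        subst hl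
        simp
      · rintro rfl
        exact ⟨[], rfl, by simp, rfl⟩
    rw [hset, Set.image_singleton]
    have : monomial (0 : Fin n →₀ ℕ) (1 : K) = 1 := by
      simp
    rw [this, Ideal.span_singleton_one, Ideal.one_eq_top]
  | succ k ih =>
    rw [pow_succ, ih, Ideal.span_mul_span']
    congr 1
    ext f
    constructor
    · rintro ⟨g, ⟨es, ⟨l, hlen, hmemD, rfl⟩, rfl⟩, h, ⟨d, hd, rfl⟩, rfl⟩
      refine ⟨l.sum + d, ⟨l ++ [d], by simp [hlen], ?_, by simp⟩, ?_⟩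
      · intro a ha
        rcases List.mem_append.mp ha with h' | h'
        · exact hmemD a h'
        · simp at h'
          subst h'
          exact hd
      · simp [monomial_mul]
    · rintro ⟨es, ⟨l, hlen, hmemD, rfl⟩, rfl⟩
      cases l with
      | nil => simp at hlen
      | cons hd tl =>
        refine ⟨monomial tl.sum 1, ⟨tl.sum, ⟨tl, by simpa using hlen, fun d hdd => hmemD d (List.mem_cons_of_mem _ hdd), rfl⟩, rfl⟩,
          monomial hd 1, ⟨hd, hmemD hd List.mem_cons_self, rfl⟩, ?_⟩
        show (monomial tl.sum (1:K)) * monomial hd 1 = monomial (hd :: tl).sum 1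
        rw [monomial_mul, mul_one, List.sum_cons, add_comm]

/-- **Lemma (colon of powers of a monomial ideal).**
Let `I ⊆ S = K[x₁,…,xₙ]` be a monomial ideal with minimal monomial generating set `Gset`
(encoded: all elements are monomials, they generate `I`, and none divides another).
Let `x^p y^q ∈ Gset` with `p, q ≥ 1` and `x, y` variables, such that every `f ∈ Gset`
satisfies: (1) if `f ≠ x^p y^q` then `y ∤ f`; (2) if `x ∣ f` then `deg_x f ≥ p`.
Then `(I^t : x^p y^q) = I^(t-1)` for all `t ≥ 2`. -/
theorem colon_power_monomial_ideal {n : ℕ} {K : Type} [Field K]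
    (Gset : Set (MvPolynomial (Fin n) K)) (I : Ideal (MvPolynomial (Fin n) K))
    (hmono : ∀ f ∈ Gset, ∃ d : Fin n →₀ ℕ, f = monomial d 1)
    (hspan : I = Ideal.span Gset)
    (hminimal : ∀ f ∈ Gset, ∀ g ∈ Gset, f ≠ g → ¬ f ∣ g)
    (x y : Fin n) (hxy : x ≠ y) (p q : ℕ) (hp : 1 ≤ p) (hq : 1 ≤ q)
    (hmem : (X x) ^ p * (X y) ^ q ∈ Gset)
    (h1 : ∀ f ∈ Gset, f ≠ (X x) ^ p * (X y) ^ q → ¬ ((X y : MvPolynomial (Fin n) K) ∣ f))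
    (h2 : ∀ f ∈ Gset, ((X x : MvPolynomial (Fin n) K) ∣ f) → p ≤ f.degreeOf x) :
    ∀ t : ℕ, 2 ≤ t →
      Submodule.colon (I ^ t) ((Ideal.span {(X x) ^ p * (X y) ^ q} : Ideal (MvPolynomial (Fin n) K)) : Set (MvPolynomial (Fin n) K)) = I ^ (t - 1) := by
  classical
  set dm : Fin n →₀ ℕ := Finsupp.single x p + Finsupp.single y q with hdm
  have hm_eq : (X x) ^ p * (X y) ^ q = (monomial dm (1 : K)) := by
    rw [X_pow_eq_monomial, X_pow_eq_monomial, monomial_mul, one_mul]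
  set D : Set (Fin n →₀ ℕ) := {d | monomial d (1 : K) ∈ Gset} with hD
  have hGset : Gset = (fun d => monomial d (1 : K)) '' D := by
    ext f
    constructor
    · intro hf
      obtain ⟨d, rfl⟩ := hmono f hf
      exact ⟨d, hf, rfl⟩
    · rintro ⟨d, hd, rfl⟩
      exact hd
  have hI : ∀ k : ℕ, I ^ k = Ideal.span ((fun d => monomial d (1 : K)) ''
      {e | ∃ l : List (Fin n →₀ ℕ), l.length = k ∧ (∀ d ∈ l, d ∈ D) ∧ l.sum = e}) := by
    intro k
    rw [hspan, hGset, pow_span_monomials]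
  have hdmD : dm ∈ D := by
    show monomial dm (1 : K) ∈ Gset
    rw [← hm_eq]
    exact hmem
  have hXy : (X y : MvPolynomial (Fin n) K) = monomial (Finsupp.single y 1) 1 := by
    rw [← pow_one (X y : MvPolynomial (Fin n) K), X_pow_eq_monomial]
  have hXx : (X x : MvPolynomial (Fin n) K) = monomial (Finsupp.single x 1) 1 := by
    rw [← pow_one (X x : MvPolynomial (Fin n) K), X_pow_eq_monomial]
  have hD1 : ∀ d ∈ D, d ≠ dm → d y = 0 := by
    intro d hd hne
    by_contra h0
    refine h1 (monomial d 1) hd ?_ ?_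
    · rw [hm_eq]
      intro heq
      exact hne (monomial_left_injective one_ne_zero heq)
    · rw [hXy, monomial_dvd_monomial]
      refine ⟨Or.inr ?_, dvd_refl _⟩
      rw [Finsupp.single_le_iff]
      omega
  have hD2 : ∀ d ∈ D, 1 ≤ d x → p ≤ d x := by
    intro d hd h1x
    have hdvd : (X x : MvPolynomial (Fin n) K) ∣ monomial d 1 := by
      rw [hXx, monomial_dvd_monomial]
      exact ⟨Or.inr (Finsupp.single_le_iff.mpr h1x), dvd_refl _⟩
    have := h2 (monomial d 1) hd hdvd
    rwa [degreeOf_monomial_eq d x one_ne_zero] at this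
  intro t ht
  ext f
  rw [Ideal.colon_span, Submodule.mem_colon_singleton, smul_eq_mul,
    hm_eq, hI t, hI (t - 1), mem_ideal_span_monomial_image, mem_ideal_span_monomial_image]
  constructor
  · intro H e he
    have hkey : e + dm ∈ (f * monomial dm (1 : K)).support := by
      rw [mem_support_iff, coeff_mul_monomial, mul_one]
      exact mem_support_iff.mp he
    obtain ⟨si, ⟨l, hlen, hmemD, rfl⟩, hle⟩ := H _ hkey
    obtain ⟨l', hlen', hmem', hle'⟩ :=
      core_aux D x y hxy p q dm hdm hD1 hD2 e l (by omega) hmemD hle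
    exact ⟨l'.sum, ⟨l', by omega, hmem', rfl⟩, hle'⟩
  · intro H xi hxi
    have hc := mem_support_iff.mp hxi
    rw [coeff_mul_monomial'] at hc
    split_ifs at hc with hle
    · rw [mul_one] at hc
      have he : xi - dm ∈ f.support := mem_support_iff.mpr hc
      obtain ⟨si, ⟨l, hlen, hmemD, rfl⟩, hle'⟩ := H _ he
      refine ⟨l.sum + dm, ⟨l ++ [dm], by simp [hlen]; omega, ?_, by simp⟩, ?_⟩
      · intro a ha
        rcases List.mem_append.mp ha with h' | h'
        · exact hmemD a h'
        · simp at h'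
          subst h'
          exact hdmD
      · calc l.sum + dm ≤ (xi - dm) + dm := add_le_add_left hle' dm
          _ = xi := tsub_add_cancel_of_le hle
    · exact absurd rfl hc
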